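/- For any continuous distribution function F on ℝ with i.i.d. sample X_1,…,X_n having empirical distribution function F_n, the distribution of the Kolmogorov distance sup_x |F_n(x) − F(x)| does not depend on F. -/

import Mathlib

open Set MeasureTheory ProbabilityTheory Finset

section KolmogorovAux

open Filter

/-- The (left-continuous generalized inverse) quantile function of `F`. -/
noncomputable def qf (F : ℝ → ℝ) (u : ℝ) : ℝ := sInf {x | u ≤ F x}

lemma qf_le_iff {F : ℝ → ℝ} (hm : Monotone F) (hc : Continuous F)
    (htop : Tendsto F atTop (nhds 1)) (hbot : Tendsto F atBot (nhds 0))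
    {u : ℝ} (hu : u ∈ Set.Ioo (0:ℝ) 1) (x : ℝ) : qf F u ≤ x ↔ u ≤ F x := by
  have hne : {x | u ≤ F x}.Nonempty := (htop.eventually (eventually_ge_nhds hu.2)).exists
  have hbdd : BddBelow {x | u ≤ F x} := by
    obtain ⟨a, ha⟩ := (hbot.eventually (eventually_lt_nhds hu.1)).exists
    refine ⟨a, fun y hy => ?_⟩
    by_contra h
    push_neg at h
    exact absurd (le_trans hy (hm h.le)) (not_le.mpr ha)
  have hclosed : IsClosed {x | u ≤ F x} := isClosed_le continuous_const hc
  have hmem : u ≤ F (sInf {x | u ≤ F x}) := hclosed.csInf_mem hne hbdd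
  constructor
  · intro h; exact le_trans hmem (hm h)
  · intro h; exact csInf_le hbdd h

lemma qf_mono {F : ℝ → ℝ} (hm : Monotone F) (hc : Continuous F)
    (htop : Tendsto F atTop (nhds 1)) (hbot : Tendsto F atBot (nhds 0)) :
    MonotoneOn (qf F) (Set.Ioo 0 1) := by
  intro u hu v hv huv
  rw [qf_le_iff hm hc htop hbot hu (qf F v)]
  exact huv.trans ((qf_le_iff hm hc htop hbot hv (qf F v)).mp le_rfl)

/-- The uniform distribution on `(0,1)`. -/
noncomputable def unif : Measure ℝ := volume.restrict (Set.Ioo 0 1)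

instance : IsProbabilityMeasure unif := ⟨by simp [unif, Real.volume_Ioo]⟩

lemma unif_Iic {a : ℝ} (h0 : 0 ≤ a) (h1 : a ≤ 1) : unif (Set.Iic a) = ENNReal.ofReal a := by
  rw [unif, Measure.restrict_apply measurableSet_Iic]
  rcases lt_or_eq_of_le h1 with h | h
  · have : Set.Iic a ∩ Set.Ioo 0 1 = Set.Ioc 0 a := by
      ext u
      simp only [Set.mem_inter_iff, Set.mem_Iic, Set.mem_Ioo, Set.mem_Ioc]
      constructor
      · rintro ⟨h1, h2, h3⟩; exact ⟨h2, h1⟩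
      · rintro ⟨h2, h3⟩; exact ⟨h3, h2, lt_of_le_of_lt h3 h⟩
    rw [this, Real.volume_Ioc]; norm_num
  · have : Set.Iic a ∩ Set.Ioo 0 1 = Set.Ioo 0 1 := by
      rw [Set.inter_eq_self_of_subset_right]
      intro u hu
      exact le_of_lt (h ▸ hu.2)
    rw [this, Real.volume_Ioo]
    rw [← h]; norm_num

/-- A measurable modification of the quantile function. -/
noncomputable def qmk (F : ℝ → ℝ) (h : MonotoneOn (qf F) (Set.Ioo 0 1)) : ℝ → ℝ :=
  (aemeasurable_restrict_of_monotoneOn (μ := volume) measurableSet_Ioo h).mk (qf F)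

lemma qmk_measurable (F : ℝ → ℝ) (h : MonotoneOn (qf F) (Set.Ioo 0 1)) :
    Measurable (qmk F h) :=
  AEMeasurable.measurable_mk _

lemma qmk_ae (F : ℝ → ℝ) (h : MonotoneOn (qf F) (Set.Ioo 0 1)) :
    ∀ᵐ u ∂unif, u ∈ Set.Ioo (0:ℝ) 1 ∧ qmk F h u = qf F u := by
  have h1 : ∀ᵐ u ∂unif, u ∈ Set.Ioo (0:ℝ) 1 := ae_restrict_mem measurableSet_Ioo
  have h2 := (aemeasurable_restrict_of_monotoneOn (μ := volume) measurableSet_Ioo h).ae_eq_mk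
  filter_upwards [h1, h2] with u hu he
  exact ⟨hu, he.symm⟩

lemma qmk_map {μ : Measure ℝ} [IsProbabilityMeasure μ] {F : ℝ → ℝ}
    (hF : ∀ x, F x = (μ (Set.Iic x)).toReal) (hm : Monotone F) (hc : Continuous F)
    (htop : Tendsto F atTop (nhds 1)) (hbot : Tendsto F atBot (nhds 0))
    (hF0 : ∀ x, 0 ≤ F x) (hF1 : ∀ x, F x ≤ 1) :
    unif.map (qmk F (qf_mono hm hc htop hbot)) = μ := by
  refine Measure.ext_of_Iic _ μ fun x => ?_
  rw [Measure.map_apply (qmk_measurable F _) measurableSet_Iic]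
  have hset : (qmk F (qf_mono hm hc htop hbot)) ⁻¹' Set.Iic x =ᵐ[unif] Set.Iic (F x) := by
    rw [Filter.eventuallyEq_set]
    filter_upwards [qmk_ae F (qf_mono hm hc htop hbot)] with u hu
    rw [Set.mem_preimage, Set.mem_Iic, Set.mem_Iic, hu.2]
    exact qf_le_iff hm hc htop hbot hu.1 x
  rw [measure_congr hset, unif_Iic (hF0 x) (hF1 x), hF x,
    ENNReal.ofReal_toReal (measure_ne_top μ _)]

lemma map_vec_eq_pi {Ω : Type*} [MeasurableSpace Ω] (P : Measure Ω) [IsProbabilityMeasure P]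
    {n : ℕ} (μ : Measure ℝ) [IsProbabilityMeasure μ] (X : Fin n → Ω → ℝ)
    (hXm : ∀ i, Measurable (X i))
    (hX : iIndepFun X P)
    (hXlaw : ∀ i, P.map (X i) = μ) :
    P.map (fun ω i => X i ω) = Measure.pi (fun _ => μ) := by
  refine (Measure.pi_eq fun s hs => ?_).symm
  rw [Measure.map_apply (measurable_pi_lambda _ hXm) (MeasurableSet.univ_pi hs)]
  have hpre : (fun ω i => X i ω) ⁻¹' (Set.pi Set.univ s) = ⋂ i ∈ Finset.univ, X i ⁻¹' s i := by
    ext ω; simp [Set.mem_pi]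
  rw [hpre, hX.measure_inter_preimage_eq_mul Finset.univ (fun i _ => hs i)]
  refine Finset.prod_congr rfl fun i _ => ?_
  rw [← hXlaw i, Measure.map_apply (hXm i) (hs i)]

lemma pi_map_comp {n : ℕ} (ν μ : Measure ℝ) [IsProbabilityMeasure ν] [IsProbabilityMeasure μ]
    (Q : ℝ → ℝ) (hQ : Measurable Q) (hQmap : ν.map Q = μ) :
    (Measure.pi fun _ : Fin n => ν).map (fun w i => Q (w i)) = Measure.pi (fun _ => μ) := by
  refine (Measure.pi_eq fun s hs => ?_).symm
  have hΦ : Measurable (fun (w : Fin n → ℝ) i => Q (w i)) :=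
    measurable_pi_lambda _ fun i => hQ.comp (measurable_pi_apply i)
  rw [Measure.map_apply hΦ (MeasurableSet.univ_pi hs)]
  have hpre : (fun (w : Fin n → ℝ) i => Q (w i)) ⁻¹' (Set.pi Set.univ s)
      = Set.pi Set.univ (fun i => Q ⁻¹' s i) := by
    ext w; simp [Set.mem_pi]
  rw [hpre, Measure.pi_pi]
  refine Finset.prod_congr rfl fun i _ => ?_
  rw [← hQmap, Measure.map_apply hQ (hs i)]

lemma pi_ae_forall {n : ℕ} (ν : Measure ℝ) [IsProbabilityMeasure ν] (p : ℝ → Prop)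
    (hp : ∀ᵐ u ∂ν, p u) :
    ∀ᵐ w ∂(Measure.pi fun _ : Fin n => ν), ∀ i, p (w i) := by
  rw [ae_all_iff]
  intro i
  rw [ae_iff]
  have h0 : ν {u | ¬ p u} = 0 := by rw [ae_iff] at hp; exact hp
  exact Measure.pi_eval_preimage_null (μ := fun _ : Fin n => ν) (i := i) h0

variable {n : ℕ}

lemma frac_bounds (hn : 0 < n) (p : Fin n → Prop) [DecidablePred p] :
    0 ≤ ((Finset.univ.filter p).card : ℝ) / n ∧ ((Finset.univ.filter p).card : ℝ) / n ≤ 1 := by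
  have hnp : (0:ℝ) < n := Nat.cast_pos.mpr hn
  constructor
  · positivity
  · rw [div_le_one hnp]
    exact_mod_cast (Finset.card_filter_le _ _).trans (by simp)

lemma term_bound (hn : 0 < n) (p : Fin n → Prop) [DecidablePred p] {t : ℝ}
    (h0 : 0 ≤ t) (h1 : t ≤ 1) :
    |((Finset.univ.filter p).card : ℝ) / n - t| ≤ 2 := by
  obtain ⟨ha, hb⟩ := frac_bounds hn p
  rw [abs_le]; constructor <;> linarith

lemma sup_eq_rat_sup (hn : 0 < n) {F : ℝ → ℝ} (hFc : Continuous F)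
    (hF0 : ∀ x, 0 ≤ F x) (hF1 : ∀ x, F x ≤ 1) (v : Fin n → ℝ) :
    (⨆ x : ℝ, |((Finset.univ.filter fun i => v i ≤ x).card : ℝ) / n - F x|)
      = ⨆ q : ℚ, |((Finset.univ.filter fun i => v i ≤ (q:ℝ)).card : ℝ) / n - F q| := by
  set h : ℝ → ℝ := fun x => |((Finset.univ.filter fun i => v i ≤ x).card : ℝ) / n - F x| with hh
  have hbd : ∀ x, h x ≤ 2 := fun x => term_bound hn _ (hF0 x) (hF1 x)
  have bdd1 : BddAbove (Set.range h) := ⟨2, by rintro _ ⟨x, rfl⟩; exact hbd x⟩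
  have bdd2 : BddAbove (Set.range fun q : ℚ => h q) := ⟨2, by rintro _ ⟨q, rfl⟩; exact hbd q⟩
  apply le_antisymm
  · apply ciSup_le
    intro x
    apply le_of_forall_pos_le_add
    intro ε hε
    obtain ⟨δ, hδ, hδF⟩ := Metric.continuous_iff.mp hFc x ε hε
    set A : Finset (Fin n) := Finset.univ.filter fun i => x < v i with hA
    set s : Finset ℝ := insert (x + δ) (A.image v) with hs
    have hsne : s.Nonempty := Finset.insert_nonempty _ _
    have hxb : x < s.min' hsne := by
      rw [Finset.lt_min'_iff]
      intro y hy
      rcases Finset.mem_insert.mp hy with rfl | hy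
      · linarith
      · obtain ⟨i, hi, rfl⟩ := Finset.mem_image.mp hy
        exact (Finset.mem_filter.mp hi).2
    obtain ⟨q, hq1, hq2⟩ := exists_rat_btwn hxb
    have hfilter : (Finset.univ.filter fun i => v i ≤ (q:ℝ))
        = Finset.univ.filter fun i => v i ≤ x := by
      apply Finset.filter_congr
      intro i _
      constructor
      · intro hle
        by_contra hgt
        push_neg at hgt
        have hiA : i ∈ A := Finset.mem_filter.mpr ⟨Finset.mem_univ i, hgt⟩
        have : s.min' hsne ≤ v i :=
          Finset.min'_le _ _ (Finset.mem_insert_of_mem (Finset.mem_image_of_mem v hiA))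
        linarith
      · intro hle
        exact le_trans hle hq1.le
    have hdist : |F q - F x| < ε := by
      have h1 : s.min' hsne ≤ x + δ := Finset.min'_le _ _ (Finset.mem_insert_self _ _)
      have : dist (q:ℝ) x < δ := by
        rw [Real.dist_eq, abs_lt]
        constructor <;> linarith
      simpa [Real.dist_eq] using hδF q this
    have key : h x ≤ h q + ε := by
      have habs : |((Finset.univ.filter fun i => v i ≤ x).card : ℝ) / n - F x|
          ≤ |((Finset.univ.filter fun i => v i ≤ x).card : ℝ) / n - F q| + |F q - F x| :=
        abs_sub_le _ _ _
      rw [hh]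
      simp only [hfilter]
      linarith
    exact key.trans (add_le_add_left (le_ciSup bdd2 q) ε)
  · apply ciSup_le
    intro q
    exact le_ciSup bdd1 (q:ℝ)

lemma card_meas (x : ℝ) :
    Measurable (fun v : Fin n → ℝ => ((Finset.univ.filter fun i => v i ≤ x).card : ℝ)) := by
  have heq : (fun v : Fin n → ℝ => ((Finset.univ.filter fun i => v i ≤ x).card : ℝ))
      = fun v => ∑ i : Fin n, if v i ≤ x then (1:ℝ) else 0 := by
    funext v
    rw [Finset.card_filter]
    push_cast
    rfl
  rw [heq]
  exact Finset.measurable_sum _ fun i _ =>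
    Measurable.ite (measurableSet_le (measurable_pi_apply i) measurable_const)
      measurable_const measurable_const

lemma sF_meas (hn : 0 < n) {F : ℝ → ℝ} (hFc : Continuous F)
    (hF0 : ∀ x, 0 ≤ F x) (hF1 : ∀ x, F x ≤ 1) :
    Measurable (fun v : Fin n → ℝ =>
      ⨆ x : ℝ, |((Finset.univ.filter fun i => v i ≤ x).card : ℝ) / n - F x|) := by
  have heq : (fun v : Fin n → ℝ =>
      ⨆ x : ℝ, |((Finset.univ.filter fun i => v i ≤ x).card : ℝ) / n - F x|)
      = fun v => ⨆ q : ℚ, |((Finset.univ.filter fun i => v i ≤ (q:ℝ)).card : ℝ) / n - F q| :=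
    funext fun v => sup_eq_rat_sup hn hFc hF0 hF1 v
  rw [heq]
  exact Measurable.iSup fun q => (((card_meas (q:ℝ)).div_const _).sub measurable_const).abs

/-- The canonical Kolmogorov-type statistic for a sample from the uniform distribution. -/
noncomputable def gfn (n : ℕ) (w : Fin n → ℝ) (t : ℝ) : ℝ :=
  |((Finset.univ.filter fun i => w i ≤ t).card : ℝ) / n - t|

instance : Nonempty (Set.Ioo (0:ℝ) 1) := ⟨⟨1/2, by norm_num⟩⟩

lemma sup_comp_eq_sup_Ioo (hn : 0 < n) {F : ℝ → ℝ} (hFm : Monotone F) (hFc : Continuous F)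
    (htop : Tendsto F atTop (nhds 1)) (hbot : Tendsto F atBot (nhds 0))
    (hF0 : ∀ x, 0 ≤ F x) (hF1 : ∀ x, F x ≤ 1)
    (w : Fin n → ℝ) (hw : ∀ i, w i ∈ Set.Ioo (0:ℝ) 1) :
    (⨆ x : ℝ, gfn n w (F x)) = ⨆ t : Set.Ioo (0:ℝ) 1, gfn n w t := by
  have hbd : ∀ t : ℝ, 0 ≤ t → t ≤ 1 → gfn n w t ≤ 2 := fun t h0 h1 => term_bound hn _ h0 h1
  have bdd1 : BddAbove (Set.range fun x : ℝ => gfn n w (F x)) :=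
    ⟨2, by rintro _ ⟨x, rfl⟩; exact hbd _ (hF0 x) (hF1 x)⟩
  have bdd2 : BddAbove (Set.range fun t : Set.Ioo (0:ℝ) 1 => gfn n w t) :=
    ⟨2, by rintro _ ⟨t, rfl⟩; exact hbd _ t.2.1.le t.2.2.le⟩
  apply le_antisymm
  · apply ciSup_le
    intro x
    rcases eq_or_lt_of_le (hF0 x) with h0 | h0
    · have hempty : (Finset.univ.filter fun i => w i ≤ F x) = ∅ := by
        apply Finset.filter_false_of_mem
        intro i _
        rw [← h0]
        exact not_le.mpr (hw i).1
      have : gfn n w (F x) = 0 := by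
        rw [gfn, hempty, ← h0]
        simp
      rw [this]
      refine le_ciSup_of_le bdd2 ⟨1/2, by norm_num⟩ (abs_nonneg _)
    rcases eq_or_lt_of_le (hF1 x) with h1 | h1
    · have huniv : (Finset.univ.filter fun i => w i ≤ F x) = Finset.univ := by
        apply Finset.filter_true_of_mem
        intro i _
        rw [h1]
        exact (hw i).2.le
      have : gfn n w (F x) = 0 := by
        rw [gfn, huniv, h1]
        rw [Finset.card_univ, Fintype.card_fin]
        rw [div_self (by exact_mod_cast hn.ne' : (n:ℝ) ≠ 0)]
        simp
      rw [this]
      refine le_ciSup_of_le bdd2 ⟨1/2, by norm_num⟩ (abs_nonneg _)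
    · exact le_ciSup bdd2 ⟨F x, h0, h1⟩
  · apply ciSup_le
    rintro ⟨t, ht⟩
    obtain ⟨b, hb⟩ := (htop.eventually (eventually_ge_nhds ht.2)).exists
    obtain ⟨a, ha⟩ := (hbot.eventually (eventually_le_nhds ht.1)).exists
    have hab : min a b ≤ b := min_le_right _ _
    have hmem : t ∈ Set.Icc (F (min a b)) (F b) :=
      ⟨le_trans (hFm (min_le_left a b)) ha, hb⟩
    obtain ⟨x, _, hx⟩ := intermediate_value_Icc hab hFc.continuousOn hmem
    show gfn n w t ≤ _
    rw [← hx]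
    exact le_ciSup bdd1 x

/-- The law of the Kolmogorov statistic always coincides with the law of the canonical
uniform statistic. -/
lemma kolmogorov_side {Ω : Type*} [MeasurableSpace Ω] (P : Measure Ω) [IsProbabilityMeasure P]
    (n : ℕ) (hn : 0 < n)
    (μ : Measure ℝ) [IsProbabilityMeasure μ]
    (F : ℝ → ℝ) (hF : ∀ x, F x = (μ (Set.Iic x)).toReal) (hFc : Continuous F)
    (X : Fin n → Ω → ℝ) (hXm : ∀ i, Measurable (X i))
    (hX : iIndepFun X P)
    (hXlaw : ∀ i, P.map (X i) = μ) :
    P.map (fun ω => ⨆ x : ℝ,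
        |((Finset.univ.filter fun i => X i ω ≤ x).card : ℝ) / n - F x|)
      = (Measure.pi fun _ : Fin n => unif).map
          (fun w => ⨆ t : Set.Ioo (0:ℝ) 1, gfn n w t) := by
  have hFcdf : F = fun x => cdf μ x := funext fun x => (hF x).trans (cdf_eq_real μ x).symm
  have hFm : Monotone F := by rw [hFcdf]; exact monotone_cdf μ
  have htop : Filter.Tendsto F Filter.atTop (nhds 1) := by rw [hFcdf]; exact tendsto_cdf_atTop μ
  have hbot : Filter.Tendsto F Filter.atBot (nhds 0) := by rw [hFcdf]; exact tendsto_cdf_atBot μ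
  have hF0 : ∀ x, 0 ≤ F x := by rw [hFcdf]; exact fun x => cdf_nonneg μ x
  have hF1 : ∀ x, F x ≤ 1 := by rw [hFcdf]; exact fun x => cdf_le_one μ x
  set Q : ℝ → ℝ := qmk F (qf_mono hFm hFc htop hbot) with hQ
  have hQmeas : Measurable Q := qmk_measurable F _
  have hQmap : unif.map Q = μ := qmk_map hF hFm hFc htop hbot hF0 hF1
  set Φ : (Fin n → ℝ) → (Fin n → ℝ) := fun w i => Q (w i) with hΦdef
  have hΦ : Measurable Φ := measurable_pi_lambda _ fun i => hQmeas.comp (measurable_pi_apply i)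
  set sF : (Fin n → ℝ) → ℝ := fun v =>
    ⨆ x : ℝ, |((Finset.univ.filter fun i => v i ≤ x).card : ℝ) / n - F x| with hsFdef
  have hsF : Measurable sF := sF_meas hn hFc hF0 hF1
  have hvec : Measurable (fun ω (i : Fin n) => X i ω) := measurable_pi_lambda _ hXm
  have step1 : P.map (fun ω => ⨆ x : ℝ,
      |((Finset.univ.filter fun i => X i ω ≤ x).card : ℝ) / n - F x|)
      = (Measure.pi fun _ : Fin n => μ).map sF := by
    rw [← map_vec_eq_pi P μ X hXm hX hXlaw, Measure.map_map hsF hvec]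
    rfl
  rw [step1, ← pi_map_comp unif μ Q hQmeas hQmap, Measure.map_map hsF hΦ]
  apply Measure.map_congr
  have hae := pi_ae_forall (n := n) unif _ (qmk_ae F (qf_mono hFm hFc htop hbot))
  filter_upwards [hae] with w hw
  have hfilt : ∀ x : ℝ, (Finset.univ.filter fun i => Φ w i ≤ x)
      = Finset.univ.filter fun i => w i ≤ F x := by
    intro x
    apply Finset.filter_congr
    intro i _
    show Q (w i) ≤ x ↔ w i ≤ F x
    rw [hQ, (hw i).2]
    exact qf_le_iff hFm hFc htop hbot (hw i).1 x
  show (⨆ x : ℝ, |((Finset.univ.filter fun i => Φ w i ≤ x).card : ℝ) / n - F x|) = _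
  simp only [hfilt]
  exact sup_comp_eq_sup_Ioo hn hFm hFc htop hbot hF0 hF1 w (fun i => (hw i).1)

end KolmogorovAux

/-- the law of the Kolmogorov statistic `sup_x |Fₙ(x) − F(x)|` of an i.i.d.
sample of size `n` with continuous distribution function `F` does not depend on `F`:
for any two continuous distribution functions `F`, `G` (of laws `μ`, `ν`) and i.i.d.
samples `X`, `Y`, the pushforward laws of the statistics coincide. -/
theorem kolmogorov_statistic_distribution_free
    {Ω : Type*} [MeasurableSpace Ω] (P : Measure Ω) [IsProbabilityMeasure P]
    (n : ℕ) (hn : 0 < n)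
    (μ ν : Measure ℝ) [IsProbabilityMeasure μ] [IsProbabilityMeasure ν]
    (F G : ℝ → ℝ)
    (hF : ∀ x, F x = (μ (Set.Iic x)).toReal) (hG : ∀ x, G x = (ν (Set.Iic x)).toReal)
    (hFc : Continuous F) (hGc : Continuous G)
    (X Y : Fin n → Ω → ℝ)
    (hXm : ∀ i, Measurable (X i)) (hYm : ∀ i, Measurable (Y i))
    (hX : iIndepFun X P)
    (hY : iIndepFun Y P)
    (hXlaw : ∀ i, P.map (X i) = μ) (hYlaw : ∀ i, P.map (Y i) = ν) :
    P.map (fun ω => ⨆ x : ℝ,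
        |((univ.filter fun i => X i ω ≤ x).card : ℝ) / n - F x|)
      = P.map (fun ω => ⨆ x : ℝ,
        |((univ.filter fun i => Y i ω ≤ x).card : ℝ) / n - G x|) := by
  rw [kolmogorov_side P n hn μ F hF hFc X hXm hX hXlaw,
    kolmogorov_side P n hn ν G hG hGc Y hYm hY hYlaw]
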